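/- Let E be a real normed vector space, g a nonzero real number, x ∈ E, and α : E → ℂ differentiable at x with α(x) ≠ 0. Define α̃ : E → Matrix 2 2 ℂ by α̃(y) = diag(α(y), α(y)⁻¹). Then α̃ is differentiable at x, and for every W ∈ Matrix 2 2 ℂ and every v ∈ E, the dressed matrix W' = α̃(x)⁻¹·W·α̃(x) + (1/g)·α̃(x)⁻¹·(Dα̃(x)(v)) has entries W'₀₀ = W₀₀ + (1/g)·α(x)⁻¹·(Dα(x)(v)), W'₀₁ = α(x)⁻²·W₀₁, W'₁₀ = α(x)²·W₁₀, and W'₁₁ = W₁₁ − (1/g)·α(x)⁻¹·(Dα(x)(v)). (The diagonal component transforms as a U(1) connection while the off-diagonal components W∓ transform tensorially with charges ∓2.) -/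

import Mathlib

attribute [local instance] Matrix.normedAddCommGroup Matrix.normedSpace

/-- Residual U(1) transformation of the dressed SU(2) potential: with
`α̃(y) = diag(α(y), α(y)⁻¹)`, the map `α̃` is differentiable at `x` and the dressed matrix
`W' = α̃(x)⁻¹ W α̃(x) + (1/g) α̃(x)⁻¹ Dα̃(x)(v)` has entries
`W'₀₀ = W₀₀ + (1/g) α(x)⁻¹ Dα(x)(v)`, `W'₀₁ = α(x)⁻² W₀₁`, `W'₁₀ = α(x)² W₁₀`,
`W'₁₁ = W₁₁ − (1/g) α(x)⁻¹ Dα(x)(v)`. -/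
theorem stmt11 {E : Type*} [NormedAddCommGroup E] [NormedSpace ℝ E]
    (g : ℝ) (hg : g ≠ 0) (x : E)
    (α : E → ℂ) (hα : DifferentiableAt ℝ α x) (hαx : α x ≠ 0)
    (αt : E → Matrix (Fin 2) (Fin 2) ℂ)
    (hαt : ∀ y : E, αt y = Matrix.diagonal ![α y, (α y)⁻¹]) :
    DifferentiableAt ℝ αt x ∧
    ∀ (W : Matrix (Fin 2) (Fin 2) ℂ) (v : E),
      ((αt x)⁻¹ * W * αt x + (1 / g) • ((αt x)⁻¹ * fderiv ℝ αt x v)) 0 0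
          = W 0 0 + (1 / g) • ((α x)⁻¹ * fderiv ℝ α x v) ∧
      ((αt x)⁻¹ * W * αt x + (1 / g) • ((αt x)⁻¹ * fderiv ℝ αt x v)) 0 1
          = ((α x) ^ 2)⁻¹ * W 0 1 ∧
      ((αt x)⁻¹ * W * αt x + (1 / g) • ((αt x)⁻¹ * fderiv ℝ αt x v)) 1 0
          = (α x) ^ 2 * W 1 0 ∧
      ((αt x)⁻¹ * W * αt x + (1 / g) • ((αt x)⁻¹ * fderiv ℝ αt x v)) 1 1
          = W 1 1 - (1 / g) • ((α x)⁻¹ * fderiv ℝ α x v) := by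
  -- Matrices `M1 = diag(1,0)` and `M2 = diag(0,1)`
  set M1 : Matrix (Fin 2) (Fin 2) ℂ := Matrix.diagonal ![1, 0] with hM1
  set M2 : Matrix (Fin 2) (Fin 2) ℂ := Matrix.diagonal ![0, 1] with hM2
  have hinv : DifferentiableAt ℝ (fun y => (α y)⁻¹) x := hα.inv hαx
  have hrep : αt = fun y => α y • M1 + (α y)⁻¹ • M2 := by
    funext y
    rw [hαt y]
    ext i j
    fin_cases i <;> fin_cases j <;>
      simp [hM1, hM2, Matrix.diagonal, Matrix.add_apply, Matrix.smul_apply]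
  have hdiff : DifferentiableAt ℝ αt x := by
    rw [hrep]; exact (hα.smul_const M1).add (hinv.smul_const M2)
  refine ⟨hdiff, fun W v => ?_⟩
  -- derivative of the inverse
  have hinvD : HasFDerivAt (fun y => (α y)⁻¹)
      ((-(ContinuousLinearMap.mulLeftRight ℝ ℂ (α x)⁻¹ (α x)⁻¹)).comp (fderiv ℝ α x)) x :=
    (hasFDerivAt_inv' (𝕜 := ℝ) hαx).comp x hα.hasFDerivAt
  have hαtD : fderiv ℝ αt x =
      (fderiv ℝ α x).smulRight M1 +
        ((-(ContinuousLinearMap.mulLeftRight ℝ ℂ (α x)⁻¹ (α x)⁻¹)).comp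
          (fderiv ℝ α x)).smulRight M2 := by
    rw [hrep]
    erw [fderiv_fun_add (hα.smul_const M1) (hinv.smul_const M2),
      fderiv_smul_const hα M1, fderiv_smul_const hinv M2, hinvD.fderiv]
    rfl
  set D : ℂ := fderiv ℝ α x v with hD
  have hDv : fderiv ℝ αt x v = D • M1 + (-((α x)⁻¹ * D * (α x)⁻¹)) • M2 := by
    rw [hαtD]
    simp [hD]
  -- the inverse matrix
  have hAinv : (αt x)⁻¹ = Matrix.diagonal ![(α x)⁻¹, α x] := by
    apply Matrix.inv_eq_left_inv
    rw [hαt x, Matrix.diagonal_mul_diagonal]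
    ext i j
    fin_cases i <;> fin_cases j <;>
      simp [Matrix.diagonal, Matrix.one_apply, hαx, inv_mul_cancel₀ hαx, mul_inv_cancel₀ hαx]
  have key : ∀ i j, ((αt x)⁻¹ * W * αt x + (1 / g) • ((αt x)⁻¹ * fderiv ℝ αt x v)) i j
      = (Matrix.diagonal ![(α x)⁻¹, α x]) i i * W i j * (Matrix.diagonal ![α x, (α x)⁻¹]) j j
        + (1 / g : ℝ) • ((Matrix.diagonal ![(α x)⁻¹, α x]) i i *
            (D • M1 + (-((α x)⁻¹ * D * (α x)⁻¹)) • M2) i j) := by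
    intro i j
    rw [hAinv, hαt x, hDv]
    fin_cases i <;> fin_cases j <;>
      simp [Matrix.mul_apply, Fin.sum_univ_two, Matrix.diagonal, Matrix.add_apply,
        Matrix.smul_apply] <;> ring
  refine ⟨?_, ?_, ?_, ?_⟩
  · rw [key 0 0]
    simp [hM1, hM2, Matrix.diagonal, Matrix.add_apply, Matrix.smul_apply, Complex.real_smul,
      mul_inv_cancel₀ hαx, inv_mul_cancel₀ hαx]
    rw [mul_assoc, mul_comm (W 0 0), ← mul_assoc, inv_mul_cancel₀ hαx, one_mul]
  · rw [key 0 1]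
    simp [hM1, hM2, Matrix.diagonal, Matrix.add_apply, Matrix.smul_apply]
    rw [sq, mul_inv]
    ring
  · rw [key 1 0]
    simp [hM1, hM2, Matrix.diagonal, Matrix.add_apply, Matrix.smul_apply]
    ring
  · rw [key 1 1]
    simp [hM1, hM2, Matrix.diagonal, Matrix.add_apply, Matrix.smul_apply, Complex.real_smul]
    have h2 : α x * (α x)⁻¹ ^ 2 = (α x)⁻¹ := by
      rw [sq]; rw [← mul_assoc, mul_inv_cancel₀ hαx, one_mul]
    have e1 : α x * W 1 1 * (α x)⁻¹ = W 1 1 := by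
      rw [mul_comm (α x), mul_assoc, mul_inv_cancel₀ hαx, mul_one]
    have e2 : α x * ((α x)⁻¹ * D * (α x)⁻¹) = (α x)⁻¹ * D := by
      rw [show α x * ((α x)⁻¹ * D * (α x)⁻¹) = α x * (α x)⁻¹ * ((α x)⁻¹ * D) from by ring,
        mul_inv_cancel₀ hαx, one_mul]
    rw [e1, e2]
    ring
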